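/- Let M ⊂ ℝ^d be compact, r > 0, and let Σ be an r-minimizer for M with H^1(Σ) > 0. Then Σ is Ahlfors regular: there exist constants C₁, C₂ > 0 and a radius ε₀ > 0 such that C₁·ε ≤ H^1(Σ ∩ B_ε(x)) ≤ C₂·ε for every x ∈ Σ and every 0 < ε < ε₀, where B_ε(x) is the open Euclidean ball of radius ε centered at x. -/

import Mathlib

open MeasureTheory Metric Set Filter EuclideanGeometry Asymptotics

open scoped Classical ENNReal NNReal

noncomputable section

/-- Euclidean space ℝ^d. -/
abbrev Euc (d : ℕ) := EuclideanSpace ℝ (Fin d)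

/-- The energy `F_M(S) = max_{y ∈ M} dist(y, S)`. -/
noncomputable def FM {d : ℕ} (M S : Set (Euc d)) : ℝ :=
  sSup ((fun y => Metric.infDist y S) '' M)

/-- `S` is an `r`-minimizer for `M`: a compact connected set with `F_M(S) ≤ r`
of minimal one-dimensional Hausdorff measure among all such sets. -/
def IsRMinimizer {d : ℕ} (M : Set (Euc d)) (r : ℝ) (S : Set (Euc d)) : Prop :=
  IsCompact S ∧ IsConnected S ∧ FM M S ≤ r ∧
    ∀ S' : Set (Euc d), IsCompact S' → IsConnected S' → FM M S' ≤ r → μH[1] S ≤ μH[1] S'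

/-- `S` is a maximal distance minimizer for `(M, l)`: a compact connected set of
one-dimensional Hausdorff measure at most `l` minimizing `F_M` among all such sets. -/
def IsMDM {d : ℕ} (M : Set (Euc d)) (l : ℝ) (S : Set (Euc d)) : Prop :=
  IsCompact S ∧ IsConnected S ∧ μH[1] S ≤ ENNReal.ofReal l ∧
    ∀ S' : Set (Euc d), IsCompact S' → IsConnected S' → μH[1] S' ≤ ENNReal.ofReal l →
      FM M S ≤ FM M S'

lemma seg_compact {E : Type*} [NormedAddCommGroup E] [NormedSpace ℝ E] (a b : E) :
    IsCompact (segment ℝ a b) := by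
  rw [segment_eq_image']
  exact isCompact_Icc.image (continuous_const.add (continuous_id.smul continuous_const))

lemma measure_seg_le {d : ℕ} (a b : Euc d) :
    μH[1] (segment ℝ a b) ≤ ENNReal.ofReal (dist a b) := by
  rw [hausdorffMeasure_segment, edist_dist]

lemma hm_Icc (ρ : ℝ) : μH[1] (Icc (0:ℝ) ρ) = ENNReal.ofReal ρ := by
  rw [MeasureTheory.hausdorffMeasure_real, Real.volume_Icc, sub_zero]

lemma hm_singleton (c : ℝ) : μH[1] ({c} : Set ℝ) = 0 := by
  rw [MeasureTheory.hausdorffMeasure_real]; exact Real.volume_singleton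

lemma lower_reach {d : ℕ} {A : Set (Euc d)} {p : Euc d} {ρ : ℝ}
    (hA : IsPreconnected A) (hp : p ∈ A) (hρ : 0 ≤ ρ) {q : Euc d} (hq : q ∈ A)
    (hd : ρ ≤ dist q p) :
    ENNReal.ofReal ρ ≤ μH[1] (A ∩ closedBall p ρ) := by
  set g : Euc d → ℝ := fun w => min (dist w p) ρ with hg
  have hlip : LipschitzWith 1 g := (LipschitzWith.dist_left p).min_const ρ
  have himg : IsPreconnected (g '' A) := hA.image g hlip.continuous.continuousOn
  have h0 : (0:ℝ) ∈ g '' A := ⟨p, hp, by simp [hg, hρ]⟩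
  have hρmem : ρ ∈ g '' A := ⟨q, hq, by simp [hg, min_eq_right hd]⟩
  have hIcc : Icc (0:ℝ) ρ ⊆ g '' A := himg.Icc_subset h0 hρmem
  have hsub : g '' A ⊆ g '' (A ∩ closedBall p ρ) ∪ {ρ} := by
    rintro - ⟨w, hw, rfl⟩
    rcases le_or_gt (dist w p) ρ with h | h
    · exact Or.inl ⟨w, ⟨hw, mem_closedBall.mpr h⟩, rfl⟩
    · right; simp [hg, min_eq_right h.le]
  calc ENNReal.ofReal ρ = μH[1] (Icc (0:ℝ) ρ) := (hm_Icc ρ).symm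
    _ ≤ μH[1] (g '' A) := measure_mono hIcc
    _ ≤ μH[1] (g '' (A ∩ closedBall p ρ) ∪ {ρ}) := measure_mono hsub
    _ ≤ μH[1] (g '' (A ∩ closedBall p ρ)) + μH[1] ({ρ} : Set ℝ) := measure_union_le _ _
    _ = μH[1] (g '' (A ∩ closedBall p ρ)) := by rw [hm_singleton, add_zero]
    _ ≤ μH[1] (A ∩ closedBall p ρ) := by
        simpa using hlip.hausdorffMeasure_image_le zero_le_one (A ∩ closedBall p ρ)

/-- Boundary bumping: in a compact preconnected set `S`, the connected component of any
point of `S \ U` inside `S \ U` meets `closure U`, provided `S ∩ U` is nonempty. -/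
lemma bumping {α : Type*} [TopologicalSpace α] [T2Space α] {S U : Set α}
    (hS : IsCompact S) (hconn : IsPreconnected S) (hU : IsOpen U)
    (hSU : (S ∩ U).Nonempty) {z : α} (hz : z ∈ S \ U) :
    (connectedComponentIn (S \ U) z ∩ closure U).Nonempty := by
  by_contra hcon
  rw [not_nonempty_iff_eq_empty] at hcon
  set K := S \ U with hK
  have hKcomp : IsCompact K := hS.diff hU
  haveI : CompactSpace K := isCompact_iff_compactSpace.mp hKcomp
  set z' : K := ⟨z, hz⟩
  have himg : connectedComponentIn K z = (↑) '' connectedComponent z' :=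
    connectedComponentIn_eq_image hz
  set F : Set K := {w : K | (w : α) ∈ closure U} with hF
  have hFcomp : IsCompact F :=
    (isClosed_closure.preimage continuous_subtype_val).isCompact
  have hcover : F ⊆ ⋃ (Z : {Z : Set K // IsClopen Z ∧ z' ∈ Z}), (↑Z : Set K)ᶜ := by
    intro w hw
    have hwnot : w ∉ connectedComponent z' := by
      intro hmem
      have : (w : α) ∈ connectedComponentIn K z ∩ closure U :=
        ⟨himg ▸ ⟨w, hmem, rfl⟩, hw⟩
      rw [hcon] at this; exact this
    rw [connectedComponent_eq_iInter_isClopen z'] at hwnot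
    simp only [mem_iInter, not_forall] at hwnot
    obtain ⟨Z, hZ⟩ := hwnot
    exact mem_iUnion.mpr ⟨Z, hZ⟩
  obtain ⟨s, hs⟩ := hFcomp.elim_finite_subcover _
    (fun Z : {Z : Set K // IsClopen Z ∧ z' ∈ Z} => Z.2.1.compl.isOpen) hcover
  set V' : Set K := ⋂ Z ∈ s, (Z : {Z : Set K // IsClopen Z ∧ z' ∈ Z}).1 with hV'
  have hV'clopen : IsClopen V' := isClopen_biInter_finset (fun Z _ => Z.2.1)
  have hzV' : z' ∈ V' := mem_iInter₂.mpr (fun Z _ => Z.2.2)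
  have hV'F : V' ∩ F = ∅ := by
    rw [eq_empty_iff_forall_notMem]
    rintro w ⟨hwV, hwF⟩
    obtain ⟨Z, hZs, hZw⟩ := mem_iUnion₂.mp (hs hwF)
    exact hZw (mem_iInter₂.mp hwV Z hZs)
  obtain ⟨O, hOopen, hOV⟩ := isOpen_induced_iff.mp hV'clopen.2
  set V : Set α := (↑) '' V' with hV
  have hVK : V ⊆ K := by rintro - ⟨w, -, rfl⟩; exact w.2
  have hVcl : IsClosed V :=
    ((hV'clopen.1.isCompact).image continuous_subtype_val).isClosed
  have hVU : V ∩ closure U = ∅ := by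
    rw [eq_empty_iff_forall_notMem]
    rintro - ⟨⟨w, hwV, rfl⟩, hwU⟩
    have : w ∈ V' ∩ F := ⟨hwV, hwU⟩
    rw [hV'F] at this; exact this
  have hVeq : V = S ∩ (O ∩ (closure U)ᶜ) := by
    apply Subset.antisymm
    · rintro - ⟨w, hwV, rfl⟩
      refine ⟨w.2.1, ?_, fun hc => ?_⟩
      · have : w ∈ (↑) ⁻¹' O := hOV ▸ hwV; exact this
      · have : (w : α) ∈ V ∩ closure U := ⟨⟨w, hwV, rfl⟩, hc⟩
        rw [hVU] at this; exact this
    · rintro w ⟨hwS, hwO, hwU⟩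
      have hwK : w ∈ K := ⟨hwS, fun hc => hwU (subset_closure hc)⟩
      exact ⟨⟨w, hwK⟩, by rw [← hOV]; exact hwO, rfl⟩
  -- contradiction with connectedness of S
  haveI : PreconnectedSpace S := Subtype.preconnectedSpace hconn
  set V'' : Set S := (↑) ⁻¹' V with hV''
  have hV''clopen : IsClopen V'' := by
    constructor
    · exact hVcl.preimage continuous_subtype_val
    · have : V'' = (↑) ⁻¹' (O ∩ (closure U)ᶜ) := by
        rw [hV'', hVeq]
        ext w; simp [w.2]
      rw [this]
      exact (hOopen.inter isClosed_closure.isOpen_compl).preimage continuous_subtype_val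
  rcases isClopen_iff.mp hV''clopen with h | h
  · have : (⟨z, hz.1⟩ : S) ∈ V'' := by
      show (z : α) ∈ V
      exact ⟨z', hzV', rfl⟩
    rw [h] at this; exact this
  · obtain ⟨y, hyS, hyU⟩ := hSU
    have : (⟨y, hyS⟩ : S) ∈ V'' := h ▸ mem_univ _
    have : y ∈ V ∩ closure U := ⟨this, subset_closure hyU⟩
    rw [hVU] at this; exact this

lemma exists_net (d : ℕ) {η : ℝ} (hη : 0 < η) :
    ∃ D : Finset (EuclideanSpace ℝ (Fin d)), (∀ θ ∈ D, ‖θ‖ = 1) ∧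
      ∀ v : EuclideanSpace ℝ (Fin d), ‖v‖ = 1 → ∃ θ ∈ D, ‖v - θ‖ ≤ η := by
  set Sp := Metric.sphere (0 : EuclideanSpace ℝ (Fin d)) 1 with hSp
  have hcov : Sp ⊆ ⋃ w : Sp, Metric.ball (w : EuclideanSpace ℝ (Fin d)) η :=
    fun w hw => mem_iUnion.mpr ⟨⟨w, hw⟩, mem_ball_self hη⟩
  obtain ⟨F, hF⟩ := (isCompact_sphere _ _).elim_finite_subcover _
    (fun w : Sp => isOpen_ball) hcov
  refine ⟨F.image (↑), ?_, ?_⟩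
  · intro θ hθ
    obtain ⟨w, -, rfl⟩ := Finset.mem_image.mp hθ
    simpa using mem_sphere_iff_norm.mp w.2
  · intro v hv
    have hvS : v ∈ Sp := by simpa [hSp] using hv
    obtain ⟨w, hwF, hw⟩ := mem_iUnion₂.mp (hF hvS)
    exact ⟨w, Finset.mem_image_of_mem _ hwF, by
      have := mem_ball_iff_norm.mp hw; linarith [this]⟩

lemma star_preconnected {d : ℕ} (x : Euc d) (s : Set (Euc d)) :
    IsPreconnected (⋃ z ∈ s, segment ℝ x z) := by
  rw [← sUnion_image]
  apply isPreconnected_sUnion x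
  · rintro - ⟨z, hz, rfl⟩; exact left_mem_segment ℝ _ _
  · rintro - ⟨z, hz, rfl⟩; exact (convex_segment _ _).isPreconnected

lemma exists_finite_energy {d : ℕ} {M : Set (Euc d)} (hMc : IsCompact M) {r : ℝ} (hr : 0 < r)
    (hMne : M.Nonempty) :
    ∃ T : Set (Euc d), IsCompact T ∧ IsConnected T ∧ FM M T ≤ r ∧ μH[1] T ≠ ⊤ := by
  obtain ⟨y₀, hy₀⟩ := hMne
  have hcov : M ⊆ ⋃ y : ↥M, ball (y : Euc d) (r/2) :=
    fun y hy => mem_iUnion.mpr ⟨⟨y, hy⟩, mem_ball_self (by linarith)⟩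
  obtain ⟨F, hF⟩ := hMc.elim_finite_subcover _ (fun y : ↥M => isOpen_ball) hcov
  set Fs : Set (Euc d) := (↑) '' (F : Set ↥M) with hFs
  have hFsfin : Fs.Finite := F.finite_toSet.image _
  set T : Set (Euc d) := ⋃ z ∈ Fs, segment ℝ y₀ z with hT
  have hcov' : ∀ y ∈ M, ∃ z ∈ Fs, dist y z < r/2 := by
    intro y hy
    obtain ⟨z, hzF, hz⟩ := mem_iUnion₂.mp (hF hy)
    exact ⟨z, ⟨z, hzF, rfl⟩, mem_ball.mp hz⟩
  have hy₀T : y₀ ∈ T := by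
    obtain ⟨z, hzF, -⟩ := hcov' y₀ hy₀
    exact mem_biUnion hzF (left_mem_segment ℝ _ _)
  have hTc : IsCompact T := hFsfin.isCompact_biUnion (fun z _ => seg_compact _ _)
  have hTpre : IsPreconnected T := star_preconnected y₀ Fs
  have hFM : FM M T ≤ r := by
    apply Real.sSup_le _ hr.le
    rintro - ⟨y, hyM, rfl⟩
    obtain ⟨z, hzF, hz⟩ := hcov' y hyM
    have hzT : z ∈ T := mem_biUnion hzF (right_mem_segment ℝ _ _)
    exact le_trans (infDist_le_dist_of_mem hzT) (by linarith)
  have hμ : μH[1] T ≠ ⊤ := by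
    have hb : T ⊆ ⋃ z ∈ hFsfin.toFinset, segment ℝ y₀ z := by
      intro w hw
      obtain ⟨z, hz, hwz⟩ := mem_iUnion₂.mp hw
      exact mem_biUnion (hFsfin.mem_toFinset.mpr hz) hwz
    refine (lt_of_le_of_lt ((measure_mono hb).trans
      (measure_biUnion_finset_le hFsfin.toFinset _)) ?_).ne
    refine ENNReal.sum_lt_top.mpr fun z _ => ?_
    exact lt_of_le_of_lt (measure_seg_le _ _) ENNReal.ofReal_lt_top
  exact ⟨T, hTc, ⟨⟨y₀, hy₀T⟩, hTpre⟩, hFM, hμ⟩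

lemma iterate_bound {u : ℝ → ℝ} {T L C : ℝ} (hT : 0 < T) (hL : 0 ≤ L) (hC : 0 ≤ C)
    (hub : ∀ t, 0 < t → u t ≤ L)
    (hstep : ∀ t, 0 < t → t ≤ T → u t ≤ C * t + u (3*t) / 6) :
    ∀ t, 0 < t → t ≤ T → u t ≤ (3*L/T + 2*C) * t := by
  have hLT : 0 ≤ 3*L/T := by positivity
  have base : ∀ t, 0 < t → t ≤ T → T/3 < t → u t ≤ (3*L/T + 2*C) * t := by
    intro t ht hT3 hlt
    have h1 : u t ≤ L := hub t ht
    have h2 : L ≤ (3*L/T) * t := by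
      rw [div_mul_eq_mul_div, le_div_iff₀ hT]
      nlinarith
    have he : (3*L/T + 2*C)*t = (3*L/T)*t + 2*C*t := by ring
    have hw : 0 ≤ (3*L/T)*t := mul_nonneg hLT ht.le
    have hw2 : 0 ≤ 2*C*t := by positivity
    linarith
  have main : ∀ n : ℕ, ∀ t, 0 < t → t ≤ T → T/3^(n+1) < t → u t ≤ (3*L/T + 2*C) * t := by
    intro n
    induction n with
    | zero =>
      intro t ht htT hlt
      exact base t ht htT (by norm_num at hlt; linarith)
    | succ n ih =>
      intro t ht htT hlt
      by_cases hc : T/3 < t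
      · exact base t ht htT hc
      · push_neg at hc
        have h3t : 3*t ≤ T := by linarith
        have h3 : (0:ℝ) < (3:ℝ)^(n+1) := by positivity
        have h32 : (0:ℝ) < (3:ℝ)^(n+1+1) := by positivity
        have hTlt : T < t * 3^(n+1+1) := (div_lt_iff₀ h32).mp hlt
        have h3t' : T/3^(n+1) < 3*t := by
          rw [div_lt_iff₀ h3]
          calc T < t * 3^(n+1+1) := hTlt
            _ = 3*t * 3^(n+1) := by ring
        have hu3 := ih (3*t) (by linarith) h3t h3t'
        have hstept := hstep t ht htT
        have hle : u t ≤ C*t + ((3*L/T + 2*C)*(3*t))/6 := by linarith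
        have he : (3*L/T + 2*C)*t = (3*L/T)*t + 2*C*t := by ring
        have he3 : (3*L/T + 2*C)*(3*t) = 3*((3*L/T)*t) + 6*(C*t) := by ring
        have hw : 0 ≤ (3*L/T)*t := mul_nonneg hLT ht.le
        linarith
  intro t ht htT
  obtain ⟨n, hn⟩ := pow_unbounded_of_one_lt (T/t) (by norm_num : (1:ℝ) < 3)
  apply main n t ht htT
  have h3 : (0:ℝ) < (3:ℝ)^(n+1) := by positivity
  rw [div_lt_iff₀ h3]
  have hTn : T < 3^n * t := by rw [div_lt_iff₀ ht] at hn; linarith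
  have hmono : (3:ℝ)^n ≤ 3^(n+1) := pow_le_pow_right₀ (by norm_num) (Nat.le_succ n)
  nlinarith

/-- The key density estimate coming from minimality. -/
lemma step_ineq {d : ℕ} {M S : Set (Euc d)} {r : ℝ}
    (hMc : IsCompact M) (hr : 0 < r)
    (hSc : IsCompact S) (hSconn : IsConnected S) (hSFM : FM M S ≤ r)
    (hmin : ∀ S' : Set (Euc d), IsCompact S' → IsConnected S' → FM M S' ≤ r →
      μH[1] S ≤ μH[1] S')
    (Hfin : μH[1] S ≠ ⊤)
    {D : Finset (Euc d)} (hDunit : ∀ θ ∈ D, ‖θ‖ = 1)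
    (hDnet : ∀ v : Euc d, ‖v‖ = 1 → ∃ θ ∈ D, ‖v - θ‖ ≤ 1/48)
    (hDne : D.Nonempty)
    {x : Euc d} (hx : x ∈ S) {t : ℝ} (ht : 0 < t) (htr : 10 * t ≤ r) :
    μH[1] (S ∩ closedBall x t) ≤
      ENNReal.ofReal (6 * D.card * t) + μH[1] (S ∩ closedBall x (3*t)) / 6 := by
  have hSne : S.Nonempty := ⟨x, hx⟩
  -- the star of spokes
  set X : Set (Euc d) := ⋃ θ ∈ D, segment ℝ x (x + (6*t) • θ) with hX
  obtain ⟨θ₀, hθ₀⟩ := hDne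
  have hxX : x ∈ X := mem_biUnion hθ₀ (left_mem_segment ℝ _ _)
  have hXcomp : IsCompact X := D.isCompact_biUnion (fun θ _ => seg_compact _ _)
  have hXpre : IsPreconnected X := by
    have h : IsPreconnected (⋃₀ ((fun θ => segment ℝ x (x + (6*t) • θ)) '' (D : Set (Euc d)))) := by
      apply isPreconnected_sUnion x
      · rintro s ⟨θ, hθ, rfl⟩; exact left_mem_segment ℝ _ _
      · rintro s ⟨θ, hθ, rfl⟩; exact (convex_segment _ _).isPreconnected
    rw [sUnion_image] at h
    simpa using h
  have hXmeas : μH[1] X ≤ ENNReal.ofReal (6 * D.card * t) := by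
    refine le_trans (measure_biUnion_finset_le D _) ?_
    have hterm : ∀ θ ∈ D, μH[1] (segment ℝ x (x + (6*t) • θ)) ≤ ENNReal.ofReal (6*t) := by
      intro θ hθ
      refine (measure_seg_le _ _).trans ?_
      have heq : dist x (x + (6*t) • θ) = 6*t := by
        rw [dist_eq_norm]
        have h : x - (x + (6*t) • θ) = -((6*t) • θ) := by abel
        rw [h, norm_neg, norm_smul, hDunit θ hθ, Real.norm_eq_abs,
          abs_of_pos (by linarith), mul_one]
      rw [heq]
    calc ∑ θ ∈ D, μH[1] (segment ℝ x (x + (6*t) • θ))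
        ≤ ∑ θ ∈ D, ENNReal.ofReal (6*t) := Finset.sum_le_sum hterm
      _ = (D.card : ℝ≥0∞) * ENNReal.ofReal (6*t) := by
          rw [Finset.sum_const, nsmul_eq_mul]
      _ = ENNReal.ofReal (6 * D.card * t) := by
          rw [← ENNReal.ofReal_natCast, ← ENNReal.ofReal_mul (by positivity)]
          ring_nf
  -- the serving property of the star
  have hserve : ∀ y : Euc d, dist y x ≤ r + 3*t → ∃ z ∈ X, dist y z ≤ r := by
    intro y hy
    by_cases hclose : dist y x ≤ r
    · exact ⟨x, hxX, hclose⟩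
    push_neg at hclose
    set s := dist y x with hs
    have hspos : 0 < s := lt_trans hr hclose
    set v : Euc d := s⁻¹ • (y - x) with hv
    have hvnorm : ‖v‖ = 1 := by
      rw [hv, norm_smul, Real.norm_eq_abs, abs_of_pos (by positivity), ← dist_eq_norm, ← hs]
      field_simp
    obtain ⟨θ, hθD, hθ⟩ := hDnet v hvnorm
    refine ⟨x + (6*t) • θ, mem_biUnion hθD (right_mem_segment ℝ _ _), ?_⟩
    have hyx : y - x = s • v := by
      rw [hv, smul_smul, mul_inv_cancel₀ hspos.ne', one_smul]
    have key : y - (x + (6*t) • θ) = (s - 6*t) • v + (6*t) • (v - θ) := by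
      rw [smul_sub, sub_smul]
      rw [← hyx]; abel
    rw [dist_eq_norm, key]
    have h1 : ‖(s - 6*t) • v‖ = s - 6*t := by
      rw [norm_smul, Real.norm_eq_abs, hvnorm, mul_one, abs_of_pos (by linarith)]
    have h2 : ‖(6*t) • (v - θ)‖ ≤ 6*t*(1/48) := by
      rw [norm_smul, Real.norm_eq_abs, abs_of_pos (by linarith)]
      exact mul_le_mul_of_nonneg_left hθ (by linarith)
    calc ‖(s - 6*t) • v + (6*t) • (v - θ)‖ ≤ ‖(s - 6*t) • v‖ + ‖(6*t) • (v - θ)‖ :=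
          norm_add_le _ _
      _ ≤ (s - 6*t) + 6*t*(1/48) := by rw [h1]; linarith [h2]
      _ ≤ r := by linarith
  -- pointwise energy bound for S
  have hpt : ∀ y ∈ M, Metric.infDist y S ≤ r := by
    intro y hy
    have hb : BddAbove ((fun y => Metric.infDist y S) '' M) :=
      (hMc.image (continuous_infDist_pt S)).bddAbove
    have hm : Metric.infDist y S ∈ (fun y => Metric.infDist y S) '' M :=
      Set.mem_image_of_mem _ hy
    exact le_trans (le_csSup hb hm) hSFM
  -- case on whether S is entirely close to x
  by_cases hKne : (S \ ball x (2*t)).Nonempty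
  case neg =>
    -- S ⊆ ball x (2t); compare with the star alone
    have hsub : S ⊆ ball x (2*t) := by
      intro w hw
      by_contra hc
      exact hKne ⟨w, hw, hc⟩
    have hFMX : FM M X ≤ r := by
      apply Real.sSup_le _ hr.le
      rintro - ⟨y, hyM, rfl⟩
      obtain ⟨z, hzS, hzd⟩ := hSc.exists_infDist_eq_dist hSne y
      have hdz : dist y z ≤ r := by rw [← hzd]; exact hpt y hyM
      have : dist y x ≤ r + 3*t := by
        have := (mem_ball.mp (hsub hzS)).le
        calc dist y x ≤ dist y z + dist z x := dist_triangle _ _ _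
          _ ≤ r + 2*t := by linarith
          _ ≤ r + 3*t := by linarith
      obtain ⟨z', hz'X, hz'⟩ := hserve y this
      exact le_trans (infDist_le_dist_of_mem hz'X) hz'
    have hμ : μH[1] S ≤ ENNReal.ofReal (6 * D.card * t) :=
      le_trans (hmin X hXcomp ⟨⟨x, hxX⟩, hXpre⟩ hFMX) hXmeas
    calc μH[1] (S ∩ closedBall x t) ≤ μH[1] S := measure_mono inter_subset_left
      _ ≤ ENNReal.ofReal (6 * D.card * t) := hμ
      _ ≤ _ := le_self_add
  case pos =>
    obtain ⟨z₀, hz₀⟩ := hKne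
    set K : Set (Euc d) := S \ ball x (2*t) with hK
    have hKcomp : IsCompact K := hSc.diff isOpen_ball
    haveI : CompactSpace K := isCompact_iff_compactSpace.mp hKcomp
    have hSU : (S ∩ ball x (2*t)).Nonempty := ⟨x, hx, mem_ball_self (by linarith)⟩
    have hbump : ∀ z ∈ K, ∃ p ∈ connectedComponentIn K z, dist p x = 2*t := by
      intro z hz
      obtain ⟨p, hpC, hpcl⟩ := bumping hSc hSconn.isPreconnected isOpen_ball hSU hz
      have hple : dist p x ≤ 2*t := mem_closedBall.mp (closure_ball_subset_closedBall hpcl)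
      have hpK : p ∈ K := connectedComponentIn_subset _ _ hpC
      have hpge : ¬ dist p x < 2*t := fun hc => hpK.2 (mem_ball.mpr hc)
      exact ⟨p, hpC, le_antisymm hple (not_lt.mp hpge)⟩
    set Big : Set (Set (Euc d)) :=
      {C | (∃ z ∈ K, connectedComponentIn K z = C) ∧ t ≤ Metric.diam C} with hBig
    have hCcl : ∀ C ∈ Big, IsClosed C ∧ C ⊆ K := by
      rintro C ⟨⟨z, hz, rfl⟩, -⟩
      constructor
      · rw [connectedComponentIn_eq_image hz]
        exact ((isClosed_connectedComponent).isCompact.image continuous_subtype_val).isClosed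
      · exact connectedComponentIn_subset _ _
    have hCpre : ∀ C ∈ Big, IsPreconnected C := by
      rintro C ⟨⟨z, hz, rfl⟩, -⟩; exact isPreconnected_connectedComponentIn
    have hCfull : ∀ C ∈ Big, ∃ p q : Euc d, p ∈ C ∧ dist p x = 2*t ∧
        ENNReal.ofReal (t/4) ≤ μH[1] (C ∩ closedBall p (t/4)) ∧ q ∈ X ∧ dist p q ≤ t/24 := by
      intro C hC
      obtain ⟨⟨z, hz, rfl⟩, hdiam⟩ := hC
      obtain ⟨p, hpC, hpx⟩ := hbump z hz
      have hfar : ∃ q ∈ connectedComponentIn K z, t/4 ≤ dist q p := by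
        by_contra hcon
        push_neg at hcon
        have hd2 : Metric.diam (connectedComponentIn K z) ≤ t/2 := by
          apply Metric.diam_le_of_forall_dist_le (by linarith)
          intro a ha b hb
          calc dist a b ≤ dist a p + dist p b := dist_triangle _ _ _
            _ ≤ t/4 + t/4 := add_le_add (hcon a ha).le
                (by rw [dist_comm]; exact (hcon b hb).le)
            _ = t/2 := by ring
        linarith
      obtain ⟨q0, hq0C, hq0⟩ := hfar
      have hlow : ENNReal.ofReal (t/4) ≤ μH[1] (connectedComponentIn K z ∩ closedBall p (t/4)) :=
        lower_reach isPreconnected_connectedComponentIn hpC (by linarith) hq0C hq0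
      set v : Euc d := (2*t)⁻¹ • (p - x) with hv
      have hvnorm : ‖v‖ = 1 := by
        rw [hv, norm_smul, Real.norm_eq_abs, abs_of_pos (by positivity), ← dist_eq_norm, hpx]
        field_simp
      obtain ⟨θ, hθD, hθn⟩ := hDnet v hvnorm
      have hseg : x + (2*t) • θ ∈ segment ℝ x (x + (6*t) • θ) := by
        rw [segment_eq_image']
        refine ⟨1/3, ⟨by norm_num, by norm_num⟩, ?_⟩
        show x + (1/3 : ℝ) • (x + (6*t) • θ - x) = x + (2*t) • θ
        rw [add_sub_cancel_left, smul_smul]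
        congr 1
        ring
      refine ⟨p, x + (2*t) • θ, hpC, hpx, hlow, mem_biUnion hθD hseg, ?_⟩
      have hpxv : p - x = (2*t) • v := by
        rw [hv, smul_smul, mul_inv_cancel₀ (by positivity), one_smul]
      have hdiffeq : p - (x + (2*t) • θ) = (2*t) • (v - θ) := by
        rw [smul_sub, ← hpxv]; abel
      rw [dist_eq_norm, hdiffeq, norm_smul, Real.norm_eq_abs, abs_of_pos (by positivity)]
      calc (2*t) * ‖v - θ‖ ≤ (2*t) * (1/48) :=
            mul_le_mul_of_nonneg_left hθn (by positivity)
        _ = t/24 := by ring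
    have hex : ∀ C : ↥Big, ∃ p q : Euc d, p ∈ (C : Set (Euc d)) ∧ dist p x = 2*t ∧
        ENNReal.ofReal (t/4) ≤ μH[1] ((C : Set (Euc d)) ∩ closedBall p (t/4)) ∧
        q ∈ X ∧ dist p q ≤ t/24 := fun C => hCfull C C.2
    choose pc qc hpcC hpcx hlowc hqcX hpq using hex
    have hdisjBig : ∀ C C' : ↥Big, C ≠ C' →
        Disjoint (C : Set (Euc d)) (C' : Set (Euc d)) := by
      intro C C' hne
      rw [Set.disjoint_left]
      intro w hwC hwC'
      obtain ⟨⟨z, hz, hCz⟩, -⟩ := C.2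
      obtain ⟨⟨z', hz', hCz'⟩, -⟩ := C'.2
      apply hne
      apply Subtype.ext
      have h1 : w ∈ connectedComponentIn K z := hCz ▸ hwC
      have h2 : w ∈ connectedComponentIn K z' := hCz' ▸ hwC'
      have e1 := connectedComponentIn_eq h1
      have e2 := connectedComponentIn_eq h2
      have heq : connectedComponentIn K z = connectedComponentIn K z' := by
        first
        | exact e1.symm.trans e2
        | exact e1.trans e2.symm
      rw [← hCz, ← hCz', heq]
    have hfinBig : Big.Finite := by
      rw [← Set.finite_coe_iff]
      have hmeas : ∀ C : ↥Big,
          MeasurableSet ((C : Set (Euc d)) ∩ closedBall (pc C) (t/4)) :=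
        fun C => ((hCcl C C.2).1.measurableSet).inter measurableSet_closedBall
      have hdisj : Pairwise (Function.onFun Disjoint
          fun C : ↥Big => (C : Set (Euc d)) ∩ closedBall (pc C) (t/4)) :=
        fun C C' hne => ((hdisjBig C C' hne).mono inter_subset_left inter_subset_left)
      have hne_top : μH[1] (⋃ C : ↥Big, (C : Set (Euc d)) ∩ closedBall (pc C) (t/4)) ≠ ⊤ := by
        refine ((measure_mono ?_).trans_lt (lt_top_iff_ne_top.mpr Hfin)).ne
        exact iUnion_subset fun C =>
          inter_subset_left.trans ((hCcl C C.2).2.trans diff_subset)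
      have hfin2 := MeasureTheory.Measure.finite_const_le_meas_of_disjoint_iUnion μH[1]
        (ENNReal.ofReal_pos.mpr (by linarith : (0:ℝ) < t/4)) hmeas hdisj hne_top
      have huniv : {C : ↥Big | ENNReal.ofReal (t/4) ≤
          μH[1] ((C : Set (Euc d)) ∩ closedBall (pc C) (t/4))} = Set.univ :=
        eq_univ_of_forall (fun C => hlowc C)
      rw [huniv, Set.finite_univ_iff] at hfin2
      exact hfin2
    haveI : Finite ↥Big := hfinBig.to_subtype
    haveI : Fintype ↥Big := hfinBig.fintype
    set W : Set (Euc d) := ⋃ C : ↥Big, (C : Set (Euc d)) with hW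
    set conn : Set (Euc d) := ⋃ C : ↥Big, segment ℝ (pc C) (qc C) with hconn
    set comp : Set (Euc d) := X ∪ (W ∪ conn) with hcomp
    have hWcomp : IsCompact W := isCompact_iUnion (fun C =>
      hSc.of_isClosed_subset (hCcl C C.2).1 ((hCcl C C.2).2.trans diff_subset))
    have hconncomp : IsCompact conn := isCompact_iUnion (fun C => seg_compact _ _)
    have hcompc : IsCompact comp := hXcomp.union (hWcomp.union hconncomp)
    have hxcomp : x ∈ comp := Or.inl hxX
    have hpre : IsPreconnected comp := by
      have h1 : comp = ⋃₀ (insert X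
          ((fun C : ↥Big => X ∪ ((C : Set (Euc d)) ∪ segment ℝ (pc C) (qc C))) ''
            Set.univ)) := by
        ext w
        simp only [hcomp, hW, hconn, sUnion_insert, sUnion_image, mem_union, mem_iUnion,
          mem_image, Set.mem_univ, true_and]
        constructor
        · rintro (h | (⟨C, h⟩ | ⟨C, h⟩))
          · exact Or.inl h
          · exact Or.inr ⟨C, trivial, Or.inr (Or.inl h)⟩
          · exact Or.inr ⟨C, trivial, Or.inr (Or.inr h)⟩
        · rintro (h | ⟨C, -, (h | (h | h))⟩)
          · exact Or.inl h
          · exact Or.inl h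
          · exact Or.inr (Or.inl ⟨C, h⟩)
          · exact Or.inr (Or.inr ⟨C, h⟩)
      rw [h1]
      apply isPreconnected_sUnion x
      · rintro s hs
        rcases mem_insert_iff.mp hs with rfl | ⟨C, -, rfl⟩
        · exact hxX
        · exact Or.inl hxX
      · rintro s hs
        rcases mem_insert_iff.mp hs with rfl | ⟨C, -, rfl⟩
        · exact hXpre
        · refine IsPreconnected.union' ⟨qc C, hqcX C, Or.inr (right_mem_segment ℝ _ _)⟩ hXpre ?_
          exact IsPreconnected.union (pc C) (hpcC C) (left_mem_segment ℝ _ _)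
            (hCpre C C.2) (convex_segment _ _).isPreconnected
    have hFMcomp : FM M comp ≤ r := by
      apply Real.sSup_le _ hr.le
      rintro - ⟨y, hyM, rfl⟩
      obtain ⟨z, hzS, hzd⟩ := hSc.exists_infDist_eq_dist hSne y
      have hdz : dist y z ≤ r := by rw [← hzd]; exact hpt y hyM
      by_cases hzb : z ∈ ball x (2*t)
      · have hyx : dist y x ≤ r + 3*t := by
          have := (mem_ball.mp hzb).le
          calc dist y x ≤ dist y z + dist z x := dist_triangle _ _ _
            _ ≤ r + 2*t := by linarith
            _ ≤ r + 3*t := by linarith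
        obtain ⟨z', hz'X, hz'⟩ := hserve y hyx
        exact le_trans (infDist_le_dist_of_mem (Or.inl hz'X)) hz'
      · have hzK : z ∈ K := ⟨hzS, hzb⟩
        by_cases hbig : t ≤ Metric.diam (connectedComponentIn K z)
        · have hmemBig : connectedComponentIn K z ∈ Big := ⟨⟨z, hzK, rfl⟩, hbig⟩
          have hzW : z ∈ comp := Or.inr (Or.inl
            (mem_iUnion.mpr ⟨⟨_, hmemBig⟩, mem_connectedComponentIn hzK⟩))
          exact le_trans (infDist_le_dist_of_mem hzW) hdz
        · push_neg at hbig
          obtain ⟨p, hpC, hpx2⟩ := hbump z hzK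
          have hbound : Bornology.IsBounded (connectedComponentIn K z) :=
            hSc.isBounded.subset ((connectedComponentIn_subset _ _).trans diff_subset)
          have hzp : dist z p ≤ Metric.diam (connectedComponentIn K z) :=
            Metric.dist_le_diam_of_mem hbound (mem_connectedComponentIn hzK) hpC
          have hyx : dist y x ≤ r + 3*t := by
            calc dist y x ≤ dist y z + dist z x := dist_triangle _ _ _
              _ ≤ dist y z + (dist z p + dist p x) := by
                  linarith [dist_triangle z p x]
              _ ≤ r + (t + 2*t) := by linarith
              _ = r + 3*t := by ring
          obtain ⟨z', hz'X, hz'⟩ := hserve y hyx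
          exact le_trans (infDist_le_dist_of_mem (Or.inl hz'X)) hz'
    have hμW : μH[1] W ≤ μH[1] (S \ ball x (2*t)) :=
      measure_mono (iUnion_subset fun C => (hCcl C C.2).2)
    have hcard : ∀ (c : ℝ≥0∞), ∑ _C : ↥Big, c = (Fintype.card ↥Big : ℝ≥0∞) * c := by
      intro c; rw [Finset.sum_const, Finset.card_univ, nsmul_eq_mul]
    have h2 : (Fintype.card ↥Big : ℝ≥0∞) * ENNReal.ofReal (t/4) ≤
        μH[1] (S ∩ closedBall x (3*t)) := by
      have hdisj : Pairwise (Function.onFun Disjoint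
          fun C : ↥Big => (C : Set (Euc d)) ∩ closedBall (pc C) (t/4)) :=
        fun C C' hne => ((hdisjBig C C' hne).mono inter_subset_left inter_subset_left)
      have hmeas : ∀ C : ↥Big,
          MeasurableSet ((C : Set (Euc d)) ∩ closedBall (pc C) (t/4)) :=
        fun C => ((hCcl C C.2).1.measurableSet).inter measurableSet_closedBall
      have hiu := measure_iUnion (μ := μH[1]) hdisj hmeas
      have hsubset : (⋃ C : ↥Big, (C : Set (Euc d)) ∩ closedBall (pc C) (t/4)) ⊆
          S ∩ closedBall x (3*t) := by
        refine iUnion_subset fun C => ?_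
        rintro w ⟨hwC, hwB⟩
        refine ⟨((hCcl C C.2).2.trans diff_subset) hwC, mem_closedBall.mpr ?_⟩
        have h1 : dist w (pc C) ≤ t/4 := mem_closedBall.mp hwB
        calc dist w x ≤ dist w (pc C) + dist (pc C) x := dist_triangle _ _ _
          _ ≤ t/4 + 2*t := by rw [hpcx C] at *; linarith
          _ ≤ 3*t := by linarith
      calc (Fintype.card ↥Big : ℝ≥0∞) * ENNReal.ofReal (t/4)
          = ∑ C : ↥Big, ENNReal.ofReal (t/4) := (hcard _).symm
        _ ≤ ∑ C : ↥Big, μH[1] ((C : Set (Euc d)) ∩ closedBall (pc C) (t/4)) :=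
            Finset.sum_le_sum (fun C _ => hlowc C)
        _ = ∑' C : ↥Big, μH[1] ((C : Set (Euc d)) ∩ closedBall (pc C) (t/4)) :=
            (tsum_fintype _).symm
        _ = μH[1] (⋃ C : ↥Big, (C : Set (Euc d)) ∩ closedBall (pc C) (t/4)) := hiu.symm
        _ ≤ μH[1] (S ∩ closedBall x (3*t)) := measure_mono hsubset
    have h1 : μH[1] conn ≤ (Fintype.card ↥Big : ℝ≥0∞) * ENNReal.ofReal (t/24) := by
      refine le_trans (measure_iUnion_fintype_le _ _) ?_
      calc ∑ C : ↥Big, μH[1] (segment ℝ (pc C) (qc C))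
          ≤ ∑ _C : ↥Big, ENNReal.ofReal (t/24) := Finset.sum_le_sum (fun C _ =>
            (measure_seg_le _ _).trans (ENNReal.ofReal_le_ofReal (hpq C)))
        _ = _ := hcard _
    have hμconn : μH[1] conn * 6 ≤ μH[1] (S ∩ closedBall x (3*t)) := by
      calc μH[1] conn * 6 ≤ ((Fintype.card ↥Big : ℝ≥0∞) * ENNReal.ofReal (t/24)) * 6 :=
            mul_le_mul_left h1 6
        _ = (Fintype.card ↥Big : ℝ≥0∞) * ENNReal.ofReal (t/4) := by
            rw [mul_assoc]
            congr 1
            rw [show (6:ℝ≥0∞) = ENNReal.ofReal 6 by simp,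
              ← ENNReal.ofReal_mul (by positivity)]
            congr 1
            ring
        _ ≤ _ := h2
    have hμconn' : μH[1] conn ≤ μH[1] (S ∩ closedBall x (3*t)) / 6 :=
      (ENNReal.le_div_iff_mul_le (Or.inl (by norm_num)) (Or.inl (by norm_num))).mpr hμconn
    have hμmin := hmin comp hcompc ⟨⟨x, hxcomp⟩, hpre⟩ hFMcomp
    have hsplit : μH[1] (S ∩ ball x (2*t)) + μH[1] (S \ ball x (2*t)) = μH[1] S :=
      measure_inter_add_diff S measurableSet_ball
    have hcompμ : μH[1] comp ≤ μH[1] (S \ ball x (2*t)) +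
        (ENNReal.ofReal (6*D.card*t) + μH[1] (S ∩ closedBall x (3*t)) / 6) := by
      calc μH[1] comp ≤ μH[1] X + (μH[1] W + μH[1] conn) :=
            le_trans (measure_union_le _ _) (by gcongr; exact measure_union_le _ _)
        _ ≤ ENNReal.ofReal (6*D.card*t) +
            (μH[1] (S \ ball x (2*t)) + μH[1] (S ∩ closedBall x (3*t)) / 6) := by
            gcongr
        _ = _ := by ring
    have hfin2 : μH[1] (S \ ball x (2*t)) ≠ ⊤ :=
      ((measure_mono diff_subset).trans_lt (lt_top_iff_ne_top.mpr Hfin)).ne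
    have hkey : μH[1] (S ∩ ball x (2*t)) ≤
        ENNReal.ofReal (6*D.card*t) + μH[1] (S ∩ closedBall x (3*t)) / 6 := by
      have h : μH[1] (S \ ball x (2*t)) + μH[1] (S ∩ ball x (2*t)) ≤
          μH[1] (S \ ball x (2*t)) +
          (ENNReal.ofReal (6*D.card*t) + μH[1] (S ∩ closedBall x (3*t)) / 6) := by
        rw [add_comm]
        calc μH[1] (S ∩ ball x (2*t)) + μH[1] (S \ ball x (2*t)) = μH[1] S := hsplit
          _ ≤ _ := hμmin.trans hcompμ
      exact (ENNReal.add_le_add_iff_left hfin2).mp h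
    exact le_trans (measure_mono (inter_subset_inter_right S
      (closedBall_subset_ball (by linarith)))) hkey

/-- Ahlfors regularity of r-minimizers. -/
theorem rMinimizer_ahlfors_regular {d : ℕ} (M : Set (Euc d)) (hM : IsCompact M)
    (r : ℝ) (hr : 0 < r) (S : Set (Euc d)) (hS : IsRMinimizer M r S)
    (hlen : 0 < μH[1] S) :
    ∃ C₁ C₂ ε₀ : ℝ, 0 < C₁ ∧ 0 < C₂ ∧ 0 < ε₀ ∧
      ∀ x ∈ S, ∀ ε : ℝ, 0 < ε → ε < ε₀ →
        ENNReal.ofReal (C₁ * ε) ≤ μH[1] (S ∩ Metric.ball x ε) ∧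
        μH[1] (S ∩ Metric.ball x ε) ≤ ENNReal.ofReal (C₂ * ε) := by
  obtain ⟨hSc, hSconn, hSFM, hmin⟩ := hS
  obtain ⟨a, ha⟩ := hSconn.nonempty
  have hsing : μH[1] ({a} : Set (Euc d)) = 0 := by
    have h := hausdorffMeasure_segment (a : Euc d) a
    rw [segment_same] at h
    rw [h, edist_self]
  have hsingleton_contra : ¬ μH[1] S ≤ μH[1] ({a} : Set (Euc d)) := by
    intro h
    rw [hsing] at h
    exact hlen.ne' (le_antisymm h (by simp))
  -- two distinct points
  have htwo : ∃ b ∈ S, b ≠ a := by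
    by_contra hcon
    push_neg at hcon
    exact hsingleton_contra (measure_mono (fun w hw => hcon w hw))
  obtain ⟨b, hb, hba⟩ := htwo
  -- M is nonempty
  have hMne : M.Nonempty := by
    by_contra hM0
    rw [not_nonempty_iff_eq_empty] at hM0
    have hFM0 : FM M ({a} : Set (Euc d)) ≤ r := by
      rw [hM0]
      simp only [FM, image_empty]
      rw [Real.sSup_empty]
      exact hr.le
    exact hsingleton_contra
      (hmin {a} isCompact_singleton ⟨⟨a, rfl⟩, isPreconnected_singleton⟩ hFM0)
  obtain ⟨T0, hT0c, hT0conn, hT0FM, hT0fin⟩ := exists_finite_energy hM hr hMne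
  have Hfin : μH[1] S ≠ ⊤ :=
    ((hmin T0 hT0c hT0conn hT0FM).trans_lt (lt_top_iff_ne_top.mpr hT0fin)).ne
  haveI hnontriv : Nontrivial (Euc d) := ⟨⟨b, a, hba⟩⟩
  obtain ⟨D, hDunit, hDnet⟩ := exists_net d (by norm_num : (0:ℝ) < 1/48)
  have hDne : D.Nonempty := by
    obtain ⟨v, hv⟩ := exists_norm_eq (Euc d) (zero_le_one)
    obtain ⟨θ, hθD, -⟩ := hDnet v hv
    exact ⟨θ, hθD⟩
  set L : ℝ := (μH[1] S).toReal with hL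
  set T : ℝ := r/10 with hTdef
  have hT : 0 < T := by rw [hTdef]; positivity
  set Cc : ℝ := 6 * D.card with hCc
  have hCcpos : 0 ≤ Cc := by rw [hCc]; positivity
  -- finiteness of local measures
  have hfinloc : ∀ (x : Euc d) (t : ℝ), μH[1] (S ∩ closedBall x t) ≠ ⊤ :=
    fun x t => ne_top_of_le_ne_top Hfin (measure_mono inter_subset_left)
  -- the real-valued step inequality
  have hstepR : ∀ x ∈ S, ∀ t, 0 < t → t ≤ T →
      (μH[1] (S ∩ closedBall x t)).toReal ≤
        Cc * t + (μH[1] (S ∩ closedBall x (3*t))).toReal / 6 := by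
    intro x hx t ht htT
    have h10 : 10 * t ≤ r := by
      rw [hTdef] at htT; linarith
    have h := step_ineq hM hr hSc hSconn hSFM hmin Hfin hDunit hDnet hDne hx ht h10
    have hrhs : ENNReal.ofReal (6 * D.card * t) + μH[1] (S ∩ closedBall x (3*t)) / 6 ≠ ⊤ := by
      refine ENNReal.add_ne_top.mpr ⟨ENNReal.ofReal_ne_top, ?_⟩
      exact (ENNReal.div_lt_top (hfinloc x (3*t)) (by norm_num)).ne
    have hmono := ENNReal.toReal_mono hrhs h
    rw [ENNReal.toReal_add ENNReal.ofReal_ne_top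
        ((ENNReal.div_lt_top (hfinloc x (3*t)) (by norm_num)).ne),
      ENNReal.toReal_ofReal (by positivity), ENNReal.toReal_div] at hmono
    simpa [hCc] using hmono
  have hubR : ∀ x ∈ S, ∀ t : ℝ, 0 < t → (μH[1] (S ∩ closedBall x t)).toReal ≤ L :=
    fun x _ t _ => ENNReal.toReal_mono Hfin (measure_mono inter_subset_left)
  have hiter : ∀ x ∈ S, ∀ t, 0 < t → t ≤ T →
      (μH[1] (S ∩ closedBall x t)).toReal ≤ (3*L/T + 2*Cc) * t := by
    intro x hx
    exact iterate_bound hT ENNReal.toReal_nonneg hCcpos (hubR x hx) (hstepR x hx)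
  -- the constants
  refine ⟨1/2, 3*L/T + 2*Cc + 1, min T (dist b a), by norm_num, ?_, ?_, ?_⟩
  · have : 0 ≤ 3*L/T := by positivity
    linarith
  · exact lt_min hT (dist_pos.mpr hba)
  intro x hx ε hε hεlt
  have hεT : ε ≤ T := le_of_lt (lt_of_lt_of_le hεlt (min_le_left _ _))
  have hεba : ε < dist b a := lt_of_lt_of_le hεlt (min_le_right _ _)
  constructor
  · -- lower bound
    have hq : ∃ q ∈ S, ε/2 ≤ dist q x := by
      by_cases hax : ε/2 ≤ dist a x
      · exact ⟨a, ha, hax⟩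
      · push_neg at hax
        refine ⟨b, hb, ?_⟩
        have h1 : dist b a ≤ dist b x + dist x a := dist_triangle _ _ _
        have h2 : dist x a = dist a x := dist_comm _ _
        linarith
    obtain ⟨q, hqS, hqd⟩ := hq
    have hlow := lower_reach hSconn.isPreconnected hx (by linarith : (0:ℝ) ≤ ε/2) hqS hqd
    have hsub : S ∩ closedBall x (ε/2) ⊆ S ∩ ball x ε :=
      inter_subset_inter_right S (closedBall_subset_ball (by linarith))
    have heq : (1/2 : ℝ) * ε = ε/2 := by ring
    rw [heq]
    exact hlow.trans (measure_mono hsub)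
  · -- upper bound
    have hh := hiter x hx ε hε hεT
    calc μH[1] (S ∩ ball x ε) ≤ μH[1] (S ∩ closedBall x ε) :=
          measure_mono (inter_subset_inter_right S ball_subset_closedBall)
      _ = ENNReal.ofReal ((μH[1] (S ∩ closedBall x ε)).toReal) :=
          (ENNReal.ofReal_toReal (hfinloc x ε)).symm
      _ ≤ ENNReal.ofReal ((3*L/T + 2*Cc + 1) * ε) :=
          ENNReal.ofReal_le_ofReal (by nlinarith)

end
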